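/- If S is a minimal d-separating set for X and Y in a DAG, then every vertex in S is an ancestor of X or of Y. -/

import Mathlib

variable {V : Type*}

/-- A directed graph (edge relation) is acyclic if no vertex reaches itself by a
nonempty directed path. -/
def Acyclic (E : V → V → Prop) : Prop := ∀ v, ¬ Relation.TransGen E v v

/-- A path in the underlying undirected graph of `E`, from `X` to `Y`:
a list of distinct vertices starting at `X`, ending at `Y`, with consecutive vertices
joined by an edge of `E` in one of the two directions. -/
def IsUPath (E : V → V → Prop) (X Y : V) (p : List V) : Prop :=
  p.Nodup ∧ p.head? = some X ∧ p.getLast? = some Y ∧ p.Chain' (fun a b => E a b ∨ E b a)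

/-- `v` is a collider on the consecutive triple `⟨u, v, w⟩`: both incident path edges
point into `v`. -/
def Collider (E : V → V → Prop) (u v w : V) : Prop := E u v ∧ E w v

/-- A path is active (d-connecting) given `Z`: every collider on it is an ancestor of
some member of `Z` and every non-collider on it is outside `Z`. -/
def Active (E : V → V → Prop) (Z : Set V) (p : List V) : Prop :=
  ∀ u v w : V, [u, v, w] <:+: p →
    (Collider E u v w → ∃ z ∈ Z, Relation.ReflTransGen E v z) ∧
    (¬ Collider E u v w → v ∉ Z)

/-- `Z` d-separates `X` and `Y`: no path between them is active given `Z`. -/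
def DSep (E : V → V → Prop) (Z : Set V) (X Y : V) : Prop :=
  ∀ p : List V, IsUPath E X Y p → ¬ Active E Z p

/-- Key auxiliary lemma: on a path whose colliders all lie in an ancestrally closed
set `A` that also contains the final endpoint, any vertex with a forward-pointing
edge along the path lies in `A`. -/
lemma downstream {E : V → V → Prop} {A : Set V}
    (hclosed : ∀ a b, E a b → b ∈ A → a ∈ A)
    {p : List V} {Y : V} (hY : p.getLast? = some Y) (hYA : Y ∈ A)
    (hchain : p.Chain' (fun a b => E a b ∨ E b a))
    (hcol : ∀ u v w : V, [u, v, w] <:+: p → Collider E u v w → v ∈ A) :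
    ∀ q : List V, q <:+ p → ∀ a b r, q = a :: b :: r → E a b → a ∈ A := by
  intro q
  induction q with
  | nil => intro _ a b r h; simp at h
  | cons x q' ih =>
    intro hsuf a b r heq hab
    injection heq with h1 h2
    subst h1; subst h2
    have hsuf' : (b :: r) <:+ p := (List.suffix_cons x _).trans hsuf
    match r with
    | [] =>
      obtain ⟨s, hs⟩ := hsuf
      rw [← hs] at hY
      have hb : b = Y := by
        simpa [List.getLast?_append] using hY
      exact hclosed x b hab (hb ▸ hYA)
    | c :: r' =>
      have hq : (x :: b :: c :: r').Chain' (fun a b => E a b ∨ E b a) :=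
        hchain.suffix hsuf
      have hbc : E b c ∨ E c b := (List.isChain_cons_cons.mp (List.isChain_cons_cons.mp hq).2).1
      rcases hbc with hbc | hcb
      · exact hclosed x b hab (ih hsuf' b c r' rfl hbc)
      · have hinf : [x, b, c] <:+: p := by
          refine List.IsInfix.trans ?_ hsuf.isInfix
          exact ⟨[], r', by simp⟩
        exact hclosed x b hab (hcol x b c hinf ⟨hab, hcb⟩)

/-- Every vertex of a minimal d-separating set for `X` and `Y` in a finite DAG is an
ancestor of `X` or of `Y`. -/
theorem minimal_dsep_subset_ancestors [Fintype V] (E : V → V → Prop) (hacy : Acyclic E)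
    (X Y : V) (S : Set V) (hS : DSep E S X Y) (hmin : ∀ T ⊂ S, ¬ DSep E T X Y) :
    ∀ Z ∈ S, Relation.ReflTransGen E Z X ∨ Relation.ReflTransGen E Z Y := by
  classical
  set A : Set V := {v | Relation.ReflTransGen E v X ∨ Relation.ReflTransGen E v Y} with hA
  have hAcl : ∀ a z, Relation.ReflTransGen E a z → z ∈ A → a ∈ A := by
    intro a z haz hz
    rcases hz with h | h
    · exact Or.inl (haz.trans h)
    · exact Or.inr (haz.trans h)
  have hclosed : ∀ a b, E a b → b ∈ A → a ∈ A := fun a b hab hb =>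
    hAcl a b (Relation.ReflTransGen.single hab) hb
  intro Z hZ
  by_contra hZA
  have hTsub : S ∩ A ⊂ S :=
    ⟨Set.inter_subset_left, fun hsub => hZA ((hsub hZ).2)⟩
  refine hmin _ hTsub ?_
  intro p hup hact
  refine hS p hup ?_
  intro u v w hinf
  have hTact := hact u v w hinf
  have hchain := hup.2.2.2
  -- colliders of p lie in A
  have hcolA : ∀ u' v' w' : V, [u', v', w'] <:+: p → Collider E u' v' w' → v' ∈ A := by
    intro u' v' w' hinf' hc'
    obtain ⟨z, hz, hrz⟩ := (hact u' v' w' hinf').1 hc'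
    exact hAcl v' z hrz hz.2
  constructor
  · intro hc
    obtain ⟨z, hz, hrz⟩ := hTact.1 hc
    exact ⟨z, hz.1, hrz⟩
  · intro hnc hvS
    refine hTact.2 hnc ⟨hvS, ?_⟩
    obtain ⟨s, t, hst⟩ := hinf
    have htri : ([u, v, w] : List V).Chain' (fun a b => E a b ∨ E b a) :=
      hchain.infix ⟨s, t, hst⟩
    have huv : E u v ∨ E v u := (List.isChain_cons_cons.mp htri).1
    have hvw : E v w ∨ E w v := (List.isChain_cons_cons.mp (List.isChain_cons_cons.mp htri).2).1
    have hout : E v u ∨ E v w := by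
      rcases huv with huv | hvu
      · rcases hvw with hvw | hwv
        · exact Or.inr hvw
        · exact absurd ⟨huv, hwv⟩ hnc
      · exact Or.inl hvu
    rcases hout with hvu | hvw
    · -- follow the path backwards: use p.reverse
      have hrchain : p.reverse.Chain' (fun a b => E a b ∨ E b a) := by
        rw [List.Chain', List.isChain_reverse]
        exact hchain.imp (fun _ _ h => h.symm)
      have hrY : p.reverse.getLast? = some X := by
        rw [List.getLast?_reverse]; exact hup.2.1
      have hrcol : ∀ u' v' w' : V, [u', v', w'] <:+: p.reverse →
          Collider E u' v' w' → v' ∈ A := by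
        intro u' v' w' hinf' hc'
        have : [w', v', u'] <:+: p := by
          have := hinf'.reverse
          simpa using this
        exact hcolA w' v' u' this ⟨hc'.2, hc'.1⟩
      have hsufr : (v :: u :: s.reverse) <:+ p.reverse :=
        ⟨t.reverse ++ [w], by simp [← hst]⟩
      exact downstream hclosed hrY (Or.inl Relation.ReflTransGen.refl) hrchain hrcol
        _ hsufr v u s.reverse rfl hvu
    · -- follow the path forwards
      have hsuff : (v :: w :: t) <:+ p := ⟨s ++ [u], by simp [← hst]⟩
      exact downstream hclosed hup.2.2.1 (Or.inr Relation.ReflTransGen.refl) hchain hcolA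
        _ hsuff v w t rfl hvw
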